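/- Let $I \subseteq K[x,y]$ be an ideal, let $\prec$ be a block order eliminating $x$, let $H$ be a minimal Gröbner basis of $I$ with respect to $\prec$ with $H \subseteq K[x,y]$, and let $h \in K[y]$ be the least common multiple of the leading coefficients of the elements of $H$ viewed in $K(y)[x]$. Then $I \cdot K(y)[x] \cap K[x,y] = (I : h^\infty)$, the saturation of $I$ by $h$. -/

import Mathlib

open MvPolynomial

/-- The saturation `(I : h^∞)` of an ideal `I` by an element `h`. -/
def satIdeal {R : Type*} [CommRing R] (I : Ideal R) (h : R) : Ideal R where
  carrier := {f | ∃ k : ℕ, h ^ k * f ∈ I}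
  zero_mem' := ⟨0, by simp⟩
  add_mem' := by
    rintro a b ⟨k, hk⟩ ⟨l, hl⟩
    refine ⟨k + l, ?_⟩
    have h1 := I.add_mem (I.mul_mem_left (h ^ l) hk) (I.mul_mem_left (h ^ k) hl)
    convert h1 using 1
    ring
  smul_mem' := by
    rintro c a ⟨k, hk⟩
    refine ⟨k, ?_⟩
    have h1 := I.mul_mem_left c hk
    convert h1 using 1
    simp [smul_eq_mul]
    ring

/-- `m` is the leading monomial of `f` with respect to the order `prec`. -/
def IsLeadingMonomial {σ R : Type*} [CommSemiring R] (prec : (σ →₀ ℕ) → (σ →₀ ℕ) → Prop)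
    (f : MvPolynomial σ R) (m : σ →₀ ℕ) : Prop :=
  m ∈ f.support ∧ ∀ m' ∈ f.support, m' = m ∨ prec m' m

/-- `G` is a (finite) Gröbner basis of the ideal `I` with respect to the order `prec`. -/
def IsGroebnerBasis {σ R : Type*} [CommSemiring R] (prec : (σ →₀ ℕ) → (σ →₀ ℕ) → Prop)
    (G : Set (MvPolynomial σ R)) (I : Ideal (MvPolynomial σ R)) : Prop :=
  G.Finite ∧ G ⊆ (I : Set (MvPolynomial σ R)) ∧
    ∀ f ∈ I, f ≠ 0 → ∀ m, IsLeadingMonomial prec f m →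
      ∃ g ∈ G, ∃ mg, IsLeadingMonomial prec g mg ∧ mg ≤ m

/-- A minimal Gröbner basis: no leading monomial of an element divides the leading monomial
of another element. -/
def IsMinimalGroebnerBasis {σ R : Type*} [CommSemiring R]
    (prec : (σ →₀ ℕ) → (σ →₀ ℕ) → Prop) (G : Set (MvPolynomial σ R))
    (I : Ideal (MvPolynomial σ R)) : Prop :=
  IsGroebnerBasis prec G I ∧ ∀ g ∈ G, g ≠ 0 ∧
    ∀ g' ∈ G, g' ≠ g → ∀ m m', IsLeadingMonomial prec g m →
      IsLeadingMonomial prec g' m' → ¬ m' ≤ m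

/-- A monomial order on exponent vectors. -/
def IsMonomialOrder {σ : Type*} (prec : (σ →₀ ℕ) → (σ →₀ ℕ) → Prop) : Prop :=
  (∀ a b, a = b ∨ prec a b ∨ prec b a) ∧
  (∀ a b c, prec a b → prec b c → prec a c) ∧
  (∀ a, ¬ prec a a) ∧
  (∀ a b : σ →₀ ℕ, a ≤ b → a ≠ b → prec a b) ∧
  (∀ a b c : σ →₀ ℕ, prec a b → prec (c + a) (c + b))

/-- The block order eliminating `x`, comparing `x`-parts first. -/
def blockOrder {σ τ : Type*} (prec1 : (σ →₀ ℕ) → (σ →₀ ℕ) → Prop)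
    (prec2 : (τ →₀ ℕ) → (τ →₀ ℕ) → Prop) (a b : (σ ⊕ τ) →₀ ℕ) : Prop :=
  prec1 (Finsupp.sumFinsuppAddEquivProdFinsupp a).1 (Finsupp.sumFinsuppAddEquivProdFinsupp b).1 ∨
    ((Finsupp.sumFinsuppAddEquivProdFinsupp a).1 = (Finsupp.sumFinsuppAddEquivProdFinsupp b).1 ∧
      prec2 (Finsupp.sumFinsuppAddEquivProdFinsupp a).2
        (Finsupp.sumFinsuppAddEquivProdFinsupp b).2)

/-- The canonical map `K[x,y] → K(y)[x]`. -/
noncomputable def toFracPoly (K σ τ : Type*) [Field K] :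
    MvPolynomial (σ ⊕ τ) K →+* MvPolynomial σ (FractionRing (MvPolynomial τ K)) :=
  (MvPolynomial.map
      (algebraMap (MvPolynomial τ K) (FractionRing (MvPolynomial τ K)))).comp
    (sumAlgEquiv K σ τ).toRingEquiv.toRingHom

/-- `c ∈ K[y]` is the leading coefficient of `g ∈ K[x,y]` viewed in `K(y)[x]` with respect to
the order `≺₁` on `x`-monomials: writing `g` as a polynomial in `x` with coefficients in
`K[y]`, it is the coefficient of the `≺₁`-leading `x`-monomial. -/
def IsLeadingCoeff {K σ τ : Type*} [Field K] (prec1 : (σ →₀ ℕ) → (σ →₀ ℕ) → Prop)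
    (g : MvPolynomial (σ ⊕ τ) K) (c : MvPolynomial τ K) : Prop :=
  ∃ m, IsLeadingMonomial prec1 (sumAlgEquiv K σ τ g) m ∧ (sumAlgEquiv K σ τ g).coeff m = c


section AuxOrder

variable {α : Type*} {prec : α → α → Prop}

lemma finset_exists_max (htot : ∀ a b, a = b ∨ prec a b ∨ prec b a)
    (htrans : ∀ a b c, prec a b → prec b c → prec a c)
    (s : Finset α) : s.Nonempty → ∃ m ∈ s, ∀ m' ∈ s, m' = m ∨ prec m' m := by
  classical
  induction s using Finset.induction_on with
  | empty => rintro ⟨x, hx⟩; simp at hx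
  | @insert a s ha ih =>
    intro _
    rcases s.eq_empty_or_nonempty with rfl | hs'
    · exact ⟨a, by simp, by simp⟩
    · obtain ⟨m, hm, hmax⟩ := ih hs'
      have main : prec a m ∨ a = m → ∃ m ∈ insert a s, ∀ m' ∈ insert a s, m' = m ∨ prec m' m := by
        intro hcase
        refine ⟨m, Finset.mem_insert_of_mem hm, ?_⟩
        intro m' hm'
        rcases Finset.mem_insert.1 hm' with rfl | h
        · rcases hcase with hp | he
          · exact Or.inr hp
          · exact Or.inl he
        · exact hmax m' h
      rcases htot a m with he | hp | hp
      · exact main (Or.inr he)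
      · exact main (Or.inl hp)
      · refine ⟨a, Finset.mem_insert_self a s, ?_⟩
        intro m' hm'
        rcases Finset.mem_insert.1 hm' with rfl | h
        · exact Or.inl rfl
        · rcases hmax m' h with rfl | h'
          · exact Or.inr hp
          · exact Or.inr (htrans m' m a h' hp)

end AuxOrder

section AuxLM

variable {α : Type*} {prec : (α →₀ ℕ) → (α →₀ ℕ) → Prop}

lemma lm_exists {R : Type*} [CommSemiring R]
    (htot : ∀ a b, a = b ∨ prec a b ∨ prec b a)
    (htrans : ∀ a b c, prec a b → prec b c → prec a c)
    {f : MvPolynomial α R} (hf : f ≠ 0) : ∃ m, IsLeadingMonomial prec f m := by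
  obtain ⟨m, hm, hmax⟩ := finset_exists_max htot htrans f.support
    (by simpa [MvPolynomial.support_eq_empty] using hf)
  exact ⟨m, hm, hmax⟩

lemma lm_unique {R : Type*} [CommSemiring R]
    (htrans : ∀ a b c, prec a b → prec b c → prec a c)
    (hirr : ∀ a, ¬ prec a a)
    {f : MvPolynomial α R} {m m' : α →₀ ℕ}
    (h : IsLeadingMonomial prec f m) (h' : IsLeadingMonomial prec f m') : m = m' := by
  rcases h.2 m' h'.1 with he | hp
  · exact he.symm
  · rcases h'.2 m h.1 with he | hp'
    · exact he
    · exact absurd (htrans _ _ _ hp hp') (hirr _)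

end AuxLM

section AuxEquiv

variable {K : Type*} [Field K] {σ τ : Type*}

lemma sumAlgEquiv_rename_inr (q : MvPolynomial τ K) :
    sumAlgEquiv K σ τ (rename Sum.inr q) = C q := by
  have h := DFunLike.congr_fun (sumAlgEquiv_comp_rename_inr K σ τ) q
  simpa using h

lemma sumAlgEquiv_rename_inl (p : MvPolynomial σ K) :
    sumAlgEquiv K σ τ (rename Sum.inl p) = map (C : K →+* MvPolynomial τ K) p := by
  have h := DFunLike.congr_fun (sumAlgEquiv_comp_rename_inl K σ τ) p
  simpa [Algebra.ofId, mapAlgHom_apply, algebraMap_eq] using h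

lemma sumElim_proj (u : (σ ⊕ τ) →₀ ℕ) :
    Finsupp.sumElim (Finsupp.sumFinsuppAddEquivProdFinsupp u).1
      (Finsupp.sumFinsuppAddEquivProdFinsupp u).2 = u := by
  ext x
  cases x with
  | inl i => simp [Finsupp.fst_sumFinsuppAddEquivProdFinsupp]
  | inr j => simp [Finsupp.snd_sumFinsuppAddEquivProdFinsupp]

lemma proj_sumElim (m₁ : σ →₀ ℕ) (m₂ : τ →₀ ℕ) :
    Finsupp.sumFinsuppAddEquivProdFinsupp (Finsupp.sumElim m₁ m₂) = (m₁, m₂) := by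
  apply Prod.ext
  · ext i; simp [Finsupp.fst_sumFinsuppAddEquivProdFinsupp]
  · ext j; simp [Finsupp.snd_sumFinsuppAddEquivProdFinsupp]

lemma mapDomain_inl_add_inr (m₁ : σ →₀ ℕ) (m₂ : τ →₀ ℕ) :
    Finsupp.mapDomain Sum.inl m₁ + Finsupp.mapDomain Sum.inr m₂ = Finsupp.sumElim m₁ m₂ := by
  ext x
  cases x with
  | inl i =>
    simp [Finsupp.mapDomain_apply Sum.inl_injective,
      Finsupp.mapDomain_notin_range _ _ (by simp : Sum.inl i ∉ Set.range Sum.inr)]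
  | inr j =>
    simp [Finsupp.mapDomain_apply Sum.inr_injective,
      Finsupp.mapDomain_notin_range _ _ (by simp : Sum.inr j ∉ Set.range Sum.inl)]

lemma sumAlgEquiv_monomial (u : (σ ⊕ τ) →₀ ℕ) (a : K) :
    sumAlgEquiv K σ τ (monomial u a) =
      monomial (Finsupp.sumFinsuppAddEquivProdFinsupp u).1
        (monomial (Finsupp.sumFinsuppAddEquivProdFinsupp u).2 a) := by
  have hu : monomial u a =
      rename Sum.inl (monomial (Finsupp.sumFinsuppAddEquivProdFinsupp u).1 a) *
        rename Sum.inr (monomial (Finsupp.sumFinsuppAddEquivProdFinsupp u).2 (1 : K)) := by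
    rw [rename_monomial, rename_monomial, monomial_mul, mul_one, mapDomain_inl_add_inr,
      sumElim_proj]
  rw [hu, map_mul, sumAlgEquiv_rename_inl, sumAlgEquiv_rename_inr, map_monomial]
  rw [mul_comm, C_mul_monomial]
  congr 1
  rw [mul_comm, C_mul_monomial, mul_one]

lemma coeff_sumAlgEquiv (q : MvPolynomial (σ ⊕ τ) K) (m₁ : σ →₀ ℕ) (m₂ : τ →₀ ℕ) :
    coeff m₂ (coeff m₁ (sumAlgEquiv K σ τ q)) = coeff (Finsupp.sumElim m₁ m₂) q := by
  classical
  induction q using MvPolynomial.induction_on' with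
  | monomial u a =>
    have hiff : u = Finsupp.sumElim m₁ m₂ ↔
        ((Finsupp.sumFinsuppAddEquivProdFinsupp u).1 = m₁ ∧
          (Finsupp.sumFinsuppAddEquivProdFinsupp u).2 = m₂) := by
      constructor
      · rintro rfl; rw [proj_sumElim]; exact ⟨rfl, rfl⟩
      · rintro ⟨h1', h2'⟩; rw [← sumElim_proj u, h1', h2']
    rw [sumAlgEquiv_monomial, coeff_monomial (m := (Finsupp.sumElim m₁ m₂))]
    by_cases hc : u = Finsupp.sumElim m₁ m₂
    · obtain ⟨e1, e2⟩ := hiff.1 hc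
      rw [if_pos hc, coeff_monomial, if_pos e1, coeff_monomial, if_pos e2]
    · rw [if_neg hc]
      rcases not_and_or.1 (mt hiff.2 hc) with h | h
      · rw [coeff_monomial, if_neg h, coeff_zero]
      · by_cases h1' : (Finsupp.sumFinsuppAddEquivProdFinsupp u).1 = m₁
        · rw [coeff_monomial, if_pos h1', coeff_monomial, if_neg h]
        · rw [coeff_monomial, if_neg h1', coeff_zero]
  | add p q hp hq => rw [map_add, coeff_add, coeff_add, hp, hq, coeff_add]

lemma mem_support_sumAlgEquiv {q : MvPolynomial (σ ⊕ τ) K} {m₁ : σ →₀ ℕ} :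
    m₁ ∈ (sumAlgEquiv K σ τ q).support ↔ ∃ m₂, Finsupp.sumElim m₁ m₂ ∈ q.support := by
  rw [mem_support_iff, MvPolynomial.ne_zero_iff]
  simp only [mem_support_iff, coeff_sumAlgEquiv]

end AuxEquiv

section AuxBlock

variable {K : Type*} [Field K] {σ τ : Type*}
variable {prec1 : (σ →₀ ℕ) → (σ →₀ ℕ) → Prop} {prec2 : (τ →₀ ℕ) → (τ →₀ ℕ) → Prop}

lemma blockOrder_total (h1 : IsMonomialOrder prec1) (h2 : IsMonomialOrder prec2) :
    ∀ a b : (σ ⊕ τ) →₀ ℕ, a = b ∨ blockOrder prec1 prec2 a b ∨ blockOrder prec1 prec2 b a := by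
  intro a b
  rcases h1.1 (Finsupp.sumFinsuppAddEquivProdFinsupp a).1
      (Finsupp.sumFinsuppAddEquivProdFinsupp b).1 with he1 | hp | hp
  · rcases h2.1 (Finsupp.sumFinsuppAddEquivProdFinsupp a).2
        (Finsupp.sumFinsuppAddEquivProdFinsupp b).2 with he2 | hq | hq
    · left
      exact Finsupp.sumFinsuppAddEquivProdFinsupp.injective (Prod.ext he1 he2)
    · exact Or.inr (Or.inl (Or.inr ⟨he1, hq⟩))
    · exact Or.inr (Or.inr (Or.inr ⟨he1.symm, hq⟩))
  · exact Or.inr (Or.inl (Or.inl hp))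
  · exact Or.inr (Or.inr (Or.inl hp))

lemma blockOrder_trans (h1 : IsMonomialOrder prec1) (h2 : IsMonomialOrder prec2) :
    ∀ a b c, blockOrder prec1 prec2 a b → blockOrder prec1 prec2 b c →
      blockOrder prec1 prec2 a c := by
  rintro a b c (hab | ⟨eab, hab⟩) (hbc | ⟨ebc, hbc⟩)
  · exact Or.inl (h1.2.1 _ _ _ hab hbc)
  · exact Or.inl (ebc ▸ hab)
  · exact Or.inl (by rw [eab]; exact hbc)
  · exact Or.inr ⟨eab.trans ebc, h2.2.1 _ _ _ hab hbc⟩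

lemma isLM_fst (_h1 : IsMonomialOrder prec1)
    {q : MvPolynomial (σ ⊕ τ) K} {M : (σ ⊕ τ) →₀ ℕ}
    (hM : IsLeadingMonomial (blockOrder prec1 prec2) q M) :
    IsLeadingMonomial prec1 (sumAlgEquiv K σ τ q)
      (Finsupp.sumFinsuppAddEquivProdFinsupp M).1 := by
  constructor
  · rw [mem_support_sumAlgEquiv]
    exact ⟨(Finsupp.sumFinsuppAddEquivProdFinsupp M).2, by rw [sumElim_proj]; exact hM.1⟩
  · intro m₁ hm₁
    rw [mem_support_sumAlgEquiv] at hm₁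
    obtain ⟨m₂, hu⟩ := hm₁
    rcases hM.2 _ hu with he | hb
    · left; rw [← he, proj_sumElim]
    · rcases hb with hp | ⟨heq, _⟩
      · right; rw [proj_sumElim] at hp; exact hp
      · left; rw [proj_sumElim] at heq; exact heq

lemma fst_mono {a b : (σ ⊕ τ) →₀ ℕ} (h : a ≤ b) :
    (Finsupp.sumFinsuppAddEquivProdFinsupp a).1 ≤
      (Finsupp.sumFinsuppAddEquivProdFinsupp b).1 := by
  rw [Finsupp.le_def] at h ⊢
  intro i
  simpa [Finsupp.fst_sumFinsuppAddEquivProdFinsupp] using h (Sum.inl i)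

lemma monomialOrder_wf [Finite σ] (h1 : IsMonomialOrder prec1) : WellFounded prec1 := by
  haveI : IsIrrefl (σ →₀ ℕ) prec1 := ⟨h1.2.2.1⟩
  haveI : IsTrans (σ →₀ ℕ) prec1 := ⟨h1.2.1⟩
  haveI : IsStrictOrder (σ →₀ ℕ) prec1 := ⟨⟩
  rw [RelEmbedding.wellFounded_iff_isEmpty]
  constructor
  intro emb
  obtain ⟨i, j, hij, hle⟩ := Set.isPWO_of_wellQuasiOrderedLE (Set.univ : Set (σ →₀ ℕ))
    (fun n => ⟨emb n, Set.mem_univ _⟩)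
  have hji : prec1 (emb j) (emb i) := emb.map_rel_iff.2 hij
  rcases eq_or_ne (emb i) (emb j) with he | hne
  · rw [he] at hji; exact h1.2.2.1 _ hji
  · exact h1.2.2.1 _ (h1.2.1 _ _ _ (h1.2.2.2.1 _ _ hle hne) hji)

lemma isLM_C_mul {R : Type*} [CommRing R] [IsDomain R] {d : R} (hd : d ≠ 0)
    {p : MvPolynomial σ R} {m : σ →₀ ℕ} :
    IsLeadingMonomial prec1 (C d * p) m ↔ IsLeadingMonomial prec1 p m := by
  have hs : (C d * p).support = p.support := by
    ext m'
    simp [mem_support_iff, coeff_C_mul, hd]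
  unfold IsLeadingMonomial
  rw [hs]

end AuxBlock

section AuxFrac

variable {K : Type*} [Field K] {σ τ : Type*}

lemma exists_clear_denom (p : MvPolynomial σ (FractionRing (MvPolynomial τ K))) :
    ∃ d : MvPolynomial τ K, d ≠ 0 ∧ ∃ q : MvPolynomial σ (MvPolynomial τ K),
      map (algebraMap (MvPolynomial τ K) (FractionRing (MvPolynomial τ K))) q =
        C (algebraMap (MvPolynomial τ K) (FractionRing (MvPolynomial τ K)) d) * p := by
  classical
  obtain ⟨b, hb⟩ := IsLocalization.exist_integer_multiples
    (nonZeroDivisors (MvPolynomial τ K)) p.support (fun m => coeff m p)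
  have hb' : ∀ m ∈ p.support, ∃ r : MvPolynomial τ K,
      algebraMap (MvPolynomial τ K) (FractionRing (MvPolynomial τ K)) r =
        (b : MvPolynomial τ K) • coeff m p := by
    intro m hm
    exact RingHom.mem_rangeS.1 (hb m hm)
  choose fn hfn using hb'
  set v : (σ →₀ ℕ) → MvPolynomial τ K :=
    fun m => if hm : m ∈ p.support then fn m hm else 0 with hv
  refine ⟨(b : MvPolynomial τ K), nonZeroDivisors.ne_zero b.2,
    p.support.sum (fun m => monomial m (v m)), ?_⟩
  ext m
  rw [coeff_map, coeff_C_mul, coeff_sum]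
  simp only [coeff_monomial]
  rw [Finset.sum_ite_eq' p.support m v]
  by_cases hm : m ∈ p.support
  · rw [if_pos hm]
    have := hfn m hm
    rw [hv]
    simp only [dif_pos hm]
    rw [this, Algebra.smul_def]
  · rw [if_neg hm]
    have : coeff m p = 0 := by simpa [mem_support_iff] using hm
    rw [this, mul_zero, map_zero]

lemma mapAlg_injective :
    Function.Injective
      (map (algebraMap (MvPolynomial τ K) (FractionRing (MvPolynomial τ K))) :
        MvPolynomial σ (MvPolynomial τ K) →
          MvPolynomial σ (FractionRing (MvPolynomial τ K))) :=
  MvPolynomial.map_injective _ (IsFractionRing.injective _ _)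

end AuxFrac

set_option synthInstance.maxHeartbeats 1000000
set_option maxHeartbeats 1600000

section AuxMain

variable {K : Type*} [Field K] {σ τ : Type*}

lemma toFracPoly_apply (f : MvPolynomial (σ ⊕ τ) K) :
    toFracPoly K σ τ f =
      map (algebraMap (MvPolynomial τ K) (FractionRing (MvPolynomial τ K)))
        (sumAlgEquiv K σ τ f) := rfl

lemma exists_denom_of_mem_map (I : Ideal (MvPolynomial (σ ⊕ τ) K))
    {f : MvPolynomial (σ ⊕ τ) K}
    (hf : toFracPoly K σ τ f ∈ Ideal.map (toFracPoly K σ τ) I) :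
    ∃ d : MvPolynomial τ K, d ≠ 0 ∧ rename Sum.inr d * f ∈ I := by
  have key : ∀ (x : MvPolynomial σ (FractionRing (MvPolynomial τ K))),
      x ∈ Ideal.map (toFracPoly K σ τ) I →
      ∃ d : MvPolynomial τ K, d ≠ 0 ∧ ∃ w ∈ I,
        map (algebraMap (MvPolynomial τ K) (FractionRing (MvPolynomial τ K)))
          (sumAlgEquiv K σ τ w) =
          C (algebraMap (MvPolynomial τ K) (FractionRing (MvPolynomial τ K)) d) * x := by
    intro x hx
    have hx' : x ∈ Ideal.span (toFracPoly K σ τ '' I) := hx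
    refine Submodule.span_induction ?_ ?_ ?_ ?_ hx'
    · rintro y ⟨w, hw, rfl⟩
      exact ⟨1, one_ne_zero, w, hw, by simp [toFracPoly_apply]⟩
    · exact ⟨1, one_ne_zero, 0, I.zero_mem, by simp⟩
    · rintro x y hx1 hy1 ⟨d1, hd1, w1, hw1, he1⟩ ⟨d2, hd2, w2, hw2, he2⟩
      refine ⟨d1 * d2, mul_ne_zero hd1 hd2,
        rename Sum.inr d2 * w1 + rename Sum.inr d1 * w2,
        I.add_mem (I.mul_mem_left _ hw1) (I.mul_mem_left _ hw2), ?_⟩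
      rw [map_add, map_add, map_mul, map_mul, map_mul, map_mul,
        sumAlgEquiv_rename_inr, sumAlgEquiv_rename_inr, map_C, map_C, he1, he2, map_mul, C_mul]
      ring
    · rintro a x hx1 ⟨d, hd, w, hw, he⟩
      obtain ⟨d', hd', q', hq'⟩ := exists_clear_denom a
      refine ⟨d' * d, mul_ne_zero hd' hd, (sumAlgEquiv K σ τ).symm q' * w,
        I.mul_mem_left _ hw, ?_⟩
      rw [smul_eq_mul, map_mul, map_mul, AlgEquiv.apply_symm_apply, hq', he, map_mul, C_mul]
      ring
  obtain ⟨d, hd, w, hw, heq⟩ := key _ hf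
  have heq2 : map (algebraMap (MvPolynomial τ K) (FractionRing (MvPolynomial τ K)))
      (sumAlgEquiv K σ τ w) =
      map (algebraMap (MvPolynomial τ K) (FractionRing (MvPolynomial τ K)))
        (sumAlgEquiv K σ τ (rename Sum.inr d * f)) := by
    rw [heq, map_mul, sumAlgEquiv_rename_inr, map_mul, map_C, toFracPoly_apply]
  have hwe : w = rename Sum.inr d * f :=
    (sumAlgEquiv K σ τ).injective (mapAlg_injective heq2)
  exact ⟨d, hd, hwe ▸ hw⟩

lemma mem_comap_of_denom (I : Ideal (MvPolynomial (σ ⊕ τ) K))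
    {f : MvPolynomial (σ ⊕ τ) K} {d : MvPolynomial τ K} (hd : d ≠ 0)
    (hmem : rename Sum.inr d * f ∈ I) :
    f ∈ Ideal.comap (toFracPoly K σ τ) (Ideal.map (toFracPoly K σ τ) I) := by
  have halg : algebraMap (MvPolynomial τ K) (FractionRing (MvPolynomial τ K)) d ≠ 0 := by
    intro h0
    exact hd (IsFractionRing.injective (MvPolynomial τ K)
      (FractionRing (MvPolynomial τ K)) (by rw [h0, map_zero]))
  have hu : IsUnit (C (algebraMap (MvPolynomial τ K) (FractionRing (MvPolynomial τ K)) d) :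
      MvPolynomial σ (FractionRing (MvPolynomial τ K))) :=
    IsUnit.map (C : FractionRing (MvPolynomial τ K) →+* _) (isUnit_iff_ne_zero.2 halg)
  rw [Ideal.mem_comap]
  have h1' : toFracPoly K σ τ (rename Sum.inr d * f) ∈ Ideal.map (toFracPoly K σ τ) I :=
    Ideal.mem_map_of_mem _ hmem
  rw [map_mul] at h1'
  have hCd : toFracPoly K σ τ (rename Sum.inr d) =
      C (algebraMap (MvPolynomial τ K) (FractionRing (MvPolynomial τ K)) d) := by
    rw [toFracPoly_apply, sumAlgEquiv_rename_inr, map_C]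
  rw [hCd] at h1'
  obtain ⟨u, hu'⟩ := hu
  rw [← hu'] at h1'
  have h2' := Ideal.mul_mem_left _ (↑u⁻¹) h1'
  rwa [← mul_assoc, Units.inv_mul, one_mul] at h2'

lemma mem_satIdeal {R : Type*} [CommRing R] (I : Ideal R) (h : R) (f : R) :
    f ∈ satIdeal I h ↔ ∃ k, h ^ k * f ∈ I := Iff.rfl

end AuxMain
/-- Let `H` be a minimal Gröbner basis of `I ⊆ K[x,y]` with respect to a
block order eliminating `x`, and let `h ∈ K[y]` be the least common multiple of the leading
coefficients of the elements of `H` viewed in `K(y)[x]`.  Then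
`I·K(y)[x] ∩ K[x,y] = (I : h^∞)`. -/
theorem extension_contraction_eq_saturation
    {K : Type*} [Field K] {σ τ : Type*} [Finite σ] [Finite τ]
    (prec1 : (σ →₀ ℕ) → (σ →₀ ℕ) → Prop) (prec2 : (τ →₀ ℕ) → (τ →₀ ℕ) → Prop)
    (h1 : IsMonomialOrder prec1) (h2 : IsMonomialOrder prec2)
    (I : Ideal (MvPolynomial (σ ⊕ τ) K)) (H : Set (MvPolynomial (σ ⊕ τ) K))
    (hH : IsMinimalGroebnerBasis (blockOrder prec1 prec2) H I)
    (h : MvPolynomial τ K)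
    -- `h` is a least common multiple of the leading coefficients of the elements of `H`
    (hdvd : ∀ g ∈ H, ∀ c, IsLeadingCoeff prec1 g c → c ∣ h)
    (hlcm : ∀ h' : MvPolynomial τ K,
      (∀ g ∈ H, ∀ c, IsLeadingCoeff prec1 g c → c ∣ h') → h ∣ h') :
    Ideal.comap (toFracPoly K σ τ) (Ideal.map (toFracPoly K σ τ) I) =
      satIdeal I (rename (Sum.inr : τ → σ ⊕ τ) h) := by
  classical
  obtain ⟨⟨hHfin, hHsub, hGB⟩, hmin⟩ := hH
  -- `h` is nonzero
  have hegne : ∀ g ∈ H, sumAlgEquiv K σ τ g ≠ 0 := fun g hg =>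
    (map_ne_zero_iff _ (AlgEquiv.injective _)).2 (hmin g hg).1
  have hhne : h ≠ 0 := by
    set lc : MvPolynomial (σ ⊕ τ) K → MvPolynomial τ K := fun g =>
      if hg : (sumAlgEquiv K σ τ g) ≠ 0 then
        (sumAlgEquiv K σ τ g).coeff
          (Classical.choose (lm_exists h1.1 h1.2.1 hg))
      else 1 with hlcdef
    set h' : MvPolynomial τ K := ∏ g ∈ hHfin.toFinset, lc g with hh'def
    have hdh' : h ∣ h' := by
      apply hlcm
      rintro g hg c ⟨mc, hmc, rfl⟩
      have hgne := hegne g hg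
      have hspec := Classical.choose_spec (lm_exists h1.1 h1.2.1 hgne)
      have hmeq : mc = Classical.choose (lm_exists h1.1 h1.2.1 hgne) :=
        lm_unique h1.2.1 h1.2.2.1 hmc hspec
      have hclc : (sumAlgEquiv K σ τ g).coeff mc = lc g := by
        rw [hlcdef]
        simp only [dif_pos hgne]
        rw [hmeq]
      rw [hclc]
      exact Finset.dvd_prod_of_mem lc (hHfin.mem_toFinset.2 hg)
    have hh'ne : h' ≠ 0 := by
      rw [hh'def]
      rw [Finset.prod_ne_zero_iff]
      intro g hgt
      have hg : g ∈ H := hHfin.mem_toFinset.1 hgt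
      have hgne := hegne g hg
      have hspec := Classical.choose_spec (lm_exists h1.1 h1.2.1 hgne)
      rw [hlcdef]
      simp only [dif_pos hgne]
      exact mem_support_iff.1 hspec.1
    intro h0
    rw [h0, zero_dvd_iff] at hdh'
    exact hh'ne hdh'
  set hh := rename (Sum.inr : τ → σ ⊕ τ) h with hhdef
  have hwf := monomialOrder_wf h1
  have main : ∀ m : σ →₀ ℕ, ∀ f : MvPolynomial (σ ⊕ τ) K,
      f ∈ Ideal.comap (toFracPoly K σ τ) (Ideal.map (toFracPoly K σ τ) I) →
      IsLeadingMonomial prec1 (sumAlgEquiv K σ τ f) m → ∃ k, hh ^ k * f ∈ I := by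
    intro m
    apply hwf.induction m
    intro m ih f hf hlm
    have hfne : sumAlgEquiv K σ τ f ≠ 0 := by
      intro h0
      have hms := hlm.1
      rw [h0] at hms
      simp at hms
    have hfne' : f ≠ 0 := fun h0 => hfne (by rw [h0, map_zero])
    obtain ⟨d0, hd0, hd0I⟩ := exists_denom_of_mem_map I (Ideal.mem_comap.1 hf)
    set f' := rename (Sum.inr : τ → σ ⊕ τ) d0 * f with hf'def
    have hf'ne : f' ≠ 0 :=
      mul_ne_zero ((map_ne_zero_iff _ (rename_injective _ Sum.inr_injective)).2 hd0) hfne'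
    obtain ⟨M, hM⟩ := lm_exists (blockOrder_total h1 h2) (blockOrder_trans h1 h2) hf'ne
    obtain ⟨g, hg, Mg, hMg, hle⟩ := hGB f' hd0I hf'ne M hM
    have hgne : g ≠ 0 := (hmin g hg).1
    have hLMg : IsLeadingMonomial prec1 (sumAlgEquiv K σ τ g)
        (Finsupp.sumFinsuppAddEquivProdFinsupp Mg).1 := isLM_fst h1 hMg
    set mg := (Finsupp.sumFinsuppAddEquivProdFinsupp Mg).1 with hmgdef
    have hLMf' : IsLeadingMonomial prec1 (sumAlgEquiv K σ τ f')
        (Finsupp.sumFinsuppAddEquivProdFinsupp M).1 := isLM_fst h1 hM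
    have hef' : sumAlgEquiv K σ τ f' = C d0 * sumAlgEquiv K σ τ f := by
      rw [hf'def, map_mul, sumAlgEquiv_rename_inr]
    have hLMf : IsLeadingMonomial prec1 (sumAlgEquiv K σ τ f)
        (Finsupp.sumFinsuppAddEquivProdFinsupp M).1 := by
      rw [hef'] at hLMf'
      exact (isLM_C_mul hd0).1 hLMf'
    have hMm : (Finsupp.sumFinsuppAddEquivProdFinsupp M).1 = m :=
      lm_unique h1.2.1 h1.2.2.1 hLMf hlm
    have hmgle : mg ≤ m := hMm ▸ fst_mono hle
    set c := (sumAlgEquiv K σ τ g).coeff mg with hcdef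
    have hcne : c ≠ 0 := mem_support_iff.1 hLMg.1
    have hcdvd : c ∣ h := hdvd g hg c ⟨mg, hLMg, rfl⟩
    set a := (sumAlgEquiv K σ τ f).coeff m with hadef
    set δ := m - mg with hδdef
    have hδ : δ + mg = m := tsub_add_cancel_of_le hmgle
    have hmδ : m - δ = mg := by rw [← hδ, add_tsub_cancel_left]
    have hδle : δ ≤ m := by rw [← hδ]; exact self_le_add_right δ mg
    set t := rename (Sum.inl : σ → σ ⊕ τ) (monomial δ (1 : K)) *
      rename (Sum.inr : τ → σ ⊕ τ) a with htdef
    have het : sumAlgEquiv K σ τ t = monomial δ a := by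
      rw [htdef, map_mul, sumAlgEquiv_rename_inl, sumAlgEquiv_rename_inr, map_monomial,
        map_one, mul_comm, C_mul_monomial, mul_one]
    set f₁ := rename (Sum.inr : τ → σ ⊕ τ) c * f - t * g with hf₁def
    have hf₁mem : f₁ ∈ Ideal.comap (toFracPoly K σ τ) (Ideal.map (toFracPoly K σ τ) I) := by
      apply Submodule.sub_mem
      · exact Ideal.mul_mem_left _ _ hf
      · exact Ideal.le_comap_map (Ideal.mul_mem_left _ _ (hHsub hg))
    have hef₁ : sumAlgEquiv K σ τ f₁ =
        C c * sumAlgEquiv K σ τ f - monomial δ a * sumAlgEquiv K σ τ g := by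
      rw [hf₁def, map_sub, map_mul, map_mul, sumAlgEquiv_rename_inr, het]
    have hcoeffm : (sumAlgEquiv K σ τ f₁).coeff m = 0 := by
      rw [hef₁, coeff_sub, coeff_C_mul, coeff_monomial_mul', if_pos hδle, hmδ,
        ← hadef, ← hcdef]
      ring
    have hsupp : ∀ m' ∈ (sumAlgEquiv K σ τ f₁).support, m' = m ∨ prec1 m' m := by
      intro m' hm'
      rw [hef₁] at hm'
      have h0 : coeff m' (C c * sumAlgEquiv K σ τ f) ≠ 0 ∨
          coeff m' (monomial δ a * sumAlgEquiv K σ τ g) ≠ 0 := by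
        by_contra hcon
        push_neg at hcon
        rw [mem_support_iff, coeff_sub, hcon.1, hcon.2, sub_zero] at hm'
        exact hm' rfl
      rcases h0 with h0 | h0
      · rw [coeff_C_mul] at h0
        exact hlm.2 m' (mem_support_iff.2 (right_ne_zero_of_mul h0))
      · rw [coeff_monomial_mul'] at h0
        by_cases hle' : δ ≤ m'
        · rw [if_pos hle'] at h0
          have hmm : m' - δ ∈ (sumAlgEquiv K σ τ g).support :=
            mem_support_iff.2 (right_ne_zero_of_mul h0)
          rcases hLMg.2 _ hmm with he | hp
          · left
            rw [← add_tsub_cancel_of_le hle', he, hδ]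
          · right
            have hp' := h1.2.2.2.2 _ _ δ hp
            rwa [add_tsub_cancel_of_le hle', hδ] at hp'
        · rw [if_neg hle'] at h0
          exact absurd rfl h0
    have hstep : ∃ k, hh ^ k * f₁ ∈ I := by
      by_cases hf₁0 : f₁ = 0
      · exact ⟨0, by rw [hf₁0, mul_zero]; exact I.zero_mem⟩
      · obtain ⟨m₁, hm₁⟩ := lm_exists h1.1 h1.2.1
          ((map_ne_zero_iff (sumAlgEquiv K σ τ) (AlgEquiv.injective _)).2 hf₁0)
        have hm₁m : prec1 m₁ m := by
          rcases hsupp m₁ hm₁.1 with he | hp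
          · exfalso
            apply mem_support_iff.1 hm₁.1
            rw [he]
            exact hcoeffm
          · exact hp
        exact ih m₁ hm₁m f₁ hf₁mem hm₁
    obtain ⟨k, hk⟩ := hstep
    obtain ⟨c', hcc'⟩ := hcdvd
    refine ⟨k + 1, ?_⟩
    have hhh : hh = rename (Sum.inr : τ → σ ⊕ τ) c * rename (Sum.inr : τ → σ ⊕ τ) c' := by
      rw [hhdef, hcc', map_mul]
    have key : hh ^ (k + 1) * f =
        rename (Sum.inr : τ → σ ⊕ τ) c' * (hh ^ k * f₁) +
          (rename (Sum.inr : τ → σ ⊕ τ) c' * hh ^ k * t) * g := by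
      rw [hf₁def, pow_succ, hhh]
      ring
    rw [key]
    exact I.add_mem (I.mul_mem_left _ hk) (I.mul_mem_left _ (hHsub hg))
  ext f
  constructor
  · intro hf
    rw [mem_satIdeal]
    by_cases hf0 : f = 0
    · exact ⟨0, by rw [hf0, mul_zero]; exact I.zero_mem⟩
    · obtain ⟨m, hm⟩ := lm_exists h1.1 h1.2.1
        ((map_ne_zero_iff (sumAlgEquiv K σ τ) (AlgEquiv.injective _)).2 hf0)
      exact main m f hf hm
  · intro hf
    rw [mem_satIdeal] at hf
    obtain ⟨k, hk⟩ := hf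
    apply mem_comap_of_denom I (pow_ne_zero k hhne)
    rw [map_pow]
    exact hk
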